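/- arXiv:1403.0542 — 3 statements merged into one kernel-verified Lean document; each statement's English description precedes it below -/
import Mathlib

section
/- Let p be an odd prime and let n1, n2 be nonnegative integers with n1 + n2 ≤ p−1. If n1 + 2·n2 ≤ p−1 then Δ^{1,2}(n1,n2,p) = (−1)^{n1+n2}·C(n1+n2, n1), and if n1 + 2·n2 ≥ p−1 then Δ^{1,2}(n1,n2,p) = (−1)^{n2}·C(p−1−n2, n1). -/
open Finset

/-- `Acount p i1 i2 n1 n2 i` is the number of pairs `(X1, X2)` of disjoint subsets of
the nonzero residues mod `p` with `|X1| = n1`, `|X2| = n2` and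
`i1·ΣX1 + i2·ΣX2 = i` in `ℤ/p`. -/
def Acount (p : ℕ) [NeZero p] (i1 i2 n1 n2 : ℕ) (i : ZMod p) : ℕ :=
  (((((Finset.univ.erase (0 : ZMod p)).powersetCard n1) ×ˢ
      ((Finset.univ.erase (0 : ZMod p)).powersetCard n2)).filter
    (fun X => X.1 ∩ X.2 = ∅ ∧
      (i1 : ZMod p) * X.1.sum id + (i2 : ZMod p) * X.2.sum id = i))).card

/-- `Δ^{i1,i2}(n1,n2,p) = A_0^{i1,i2}(n1,n2,p) - A_1^{i1,i2}(n1,n2,p)`. -/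
def Delta (p : ℕ) [NeZero p] (i1 i2 n1 n2 : ℕ) : ℤ :=
  (Acount p i1 i2 n1 n2 0 : ℤ) - (Acount p i1 i2 n1 n2 1 : ℤ)

/-! ### Auxiliary machinery -/

/-- Pairs of disjoint subsets of `S` of sizes `n1, n2` with `ΣX1 + 2·ΣX2 = i`. -/
def PairsOn (p : ℕ) [NeZero p] (S : Finset (ZMod p)) (n1 n2 : ℕ) (i : ZMod p) :
    Finset (Finset (ZMod p) × Finset (ZMod p)) :=
  ((S.powersetCard n1 ×ˢ S.powersetCard n2).filter
    (fun X => X.1 ∩ X.2 = ∅ ∧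
      ((1 : ℕ) : ZMod p) * X.1.sum id + ((2 : ℕ) : ZMod p) * X.2.sum id = i))

lemma mem_pairsOn {p : ℕ} [NeZero p] {S : Finset (ZMod p)} {n1 n2 : ℕ} {i : ZMod p}
    {X : Finset (ZMod p) × Finset (ZMod p)} :
    X ∈ PairsOn p S n1 n2 i ↔
      X.1 ⊆ S ∧ X.1.card = n1 ∧ X.2 ⊆ S ∧ X.2.card = n2 ∧ X.1 ∩ X.2 = ∅ ∧
        X.1.sum id + 2 * X.2.sum id = i := by
  simp [PairsOn, Finset.mem_powersetCard, and_assoc]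

lemma acount_eq_pairsOn (p : ℕ) [NeZero p] (n1 n2 : ℕ) (i : ZMod p) :
    Acount p 1 2 n1 n2 i = (PairsOn p (Finset.univ.erase 0) n1 n2 i).card := rfl

lemma two_ne_zero_zmod {p : ℕ} [NeZero p] (hp : p.Prime) (hodd : Odd p) :
    (2 : ZMod p) ≠ 0 := by
  haveI := Fact.mk hp
  have : ((2 : ℕ) : ZMod p) ≠ 0 := by
    rw [Ne, ZMod.natCast_eq_zero_iff]
    intro h
    have := (Nat.prime_dvd_prime_iff_eq hp Nat.prime_two).mp h
    subst this
    exact (Nat.not_odd_iff_even.mpr (by decide)) hodd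
  simpa using this

lemma sum_univ_zmod {p : ℕ} [NeZero p] (hp : p.Prime) (hodd : Odd p) :
    ∑ x : ZMod p, x = 0 := by
  haveI := Fact.mk hp
  have h : ∑ x : ZMod p, x = ∑ x : ZMod p, -x :=
    (Fintype.sum_bijective Neg.neg neg_involutive.bijective _ _ (fun x => rfl)).symm
  rw [Finset.sum_neg_distrib] at h
  have h2 : (2 : ZMod p) * ∑ x : ZMod p, x = 0 := by
    rw [two_mul]; nth_rewrite 2 [h]; ring
  exact (mul_eq_zero.mp h2).resolve_left (two_ne_zero_zmod hp hodd)

lemma sum_erase_zero_zmod {p : ℕ} [NeZero p] (hp : p.Prime) (hodd : Odd p) :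
    ((Finset.univ.erase (0 : ZMod p)).sum id) = 0 := by
  have := Finset.sum_erase (f := id) (Finset.univ : Finset (ZMod p)) (a := (0 : ZMod p)) rfl
  rw [this]
  simpa using sum_univ_zmod hp hodd

lemma card_erase_zero_zmod {p : ℕ} [NeZero p] :
    (Finset.univ.erase (0 : ZMod p)).card = p - 1 := by
  rw [Finset.card_erase_of_mem (Finset.mem_univ _), Finset.card_univ, ZMod.card]

/-! ### The negation bijection -/

lemma pairsOn_neg (p : ℕ) [NeZero p] (n1 n2 : ℕ) (i : ZMod p) :
    (PairsOn p (Finset.univ.erase 0) n1 n2 i).card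
      = (PairsOn p (Finset.univ.erase 0) n1 n2 (-i)).card := by
  have hinj : Function.Injective (Neg.neg : ZMod p → ZMod p) := neg_injective
  have hmaps : ∀ (j : ZMod p), ∀ X ∈ PairsOn p (Finset.univ.erase 0) n1 n2 j,
      (X.1.image Neg.neg, X.2.image Neg.neg) ∈ PairsOn p (Finset.univ.erase 0) n1 n2 (-j) := by
    intro j X hX
    rw [mem_pairsOn] at hX ⊢
    obtain ⟨h1S, h1c, h2S, h2c, hd, hs⟩ := hX
    have hsub : ∀ (Y : Finset (ZMod p)), Y ⊆ Finset.univ.erase 0 →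
        Y.image Neg.neg ⊆ Finset.univ.erase 0 := by
      intro Y hY x hx
      simp only [Finset.mem_image] at hx
      obtain ⟨a, ha, rfl⟩ := hx
      have := Finset.mem_erase.mp (hY ha)
      simp [Finset.mem_erase, neg_eq_zero, this.1]
    refine ⟨hsub _ h1S, ?_, hsub _ h2S, ?_, ?_, ?_⟩
    · rw [Finset.card_image_of_injective _ hinj, h1c]
    · rw [Finset.card_image_of_injective _ hinj, h2c]
    · rw [← Finset.image_inter _ _ hinj, hd, Finset.image_empty]
    · have e1 : (X.1.image Neg.neg).sum id = -(X.1.sum id) := by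
        rw [Finset.sum_image (fun a _ b _ h => hinj h)]
        exact Finset.sum_neg_distrib id
      have e2 : (X.2.image Neg.neg).sum id = -(X.2.sum id) := by
        rw [Finset.sum_image (fun a _ b _ h => hinj h)]
        exact Finset.sum_neg_distrib id
      rw [e1, e2]
      linear_combination -hs
  refine Finset.card_nbij' (fun X => (X.1.image Neg.neg, X.2.image Neg.neg))
    (fun X => (X.1.image Neg.neg, X.2.image Neg.neg))
    (hmaps i) (fun X hX => by simpa using hmaps (-i) X hX) ?_ ?_
  all_goals
    intro X _
    have hcanc : ∀ (Y : Finset (ZMod p)), (Y.image Neg.neg).image Neg.neg = Y := by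
      intro Y
      rw [Finset.image_image]
      have : (Neg.neg ∘ Neg.neg : ZMod p → ZMod p) = id := by funext x; simp
      rw [this, Finset.image_id]
    exact Prod.ext (hcanc _) (hcanc _)

/-! ### The complementation bijection -/

lemma compl_compl_eq {α : Type*} [DecidableEq α] {S X1 X2 : Finset α}
    (h1 : X1 ⊆ S) (h2 : X2 ⊆ S) (hd : X1 ∩ X2 = ∅) :
    S \ (X1 ∪ (S \ (X1 ∪ X2))) = X2 := by
  have hd' : ∀ x, x ∈ X1 → x ∉ X2 := by
    intro x hx1 hx2
    have : x ∈ X1 ∩ X2 := Finset.mem_inter.mpr ⟨hx1, hx2⟩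
    simp [hd] at this
  ext x
  have h2x : x ∈ X2 → x ∈ S := fun hx => h2 hx
  have hdx : x ∈ X1 → x ∉ X2 := hd' x
  simp only [Finset.mem_sdiff, Finset.mem_union]
  tauto

lemma pairsOn_compl_maps {p : ℕ} [NeZero p] (hp : p.Prime) (hodd : Odd p)
    {n1 n2 : ℕ} (h : n1 + n2 ≤ p - 1) {i : ZMod p} :
    ∀ X ∈ PairsOn p (Finset.univ.erase 0) n1 n2 i,
      (X.1, (Finset.univ.erase 0) \ (X.1 ∪ X.2)) ∈
        PairsOn p (Finset.univ.erase 0) n1 (p - 1 - n1 - n2) (-i) := by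
  intro X hX
  rw [mem_pairsOn] at hX ⊢
  obtain ⟨h1S, h1c, h2S, h2c, hd, hs⟩ := hX
  have hdisj : Disjoint X.1 X.2 := Finset.disjoint_iff_inter_eq_empty.mpr hd
  have hu : X.1 ∪ X.2 ⊆ Finset.univ.erase 0 := Finset.union_subset h1S h2S
  have hcard : ((Finset.univ.erase 0 : Finset (ZMod p)) \ (X.1 ∪ X.2)).card
      = p - 1 - n1 - n2 := by
    rw [Finset.card_sdiff_of_subset hu, card_erase_zero_zmod, Finset.card_union_of_disjoint hdisj,
      h1c, h2c]
    omega
  have hsum : ((Finset.univ.erase 0 : Finset (ZMod p)) \ (X.1 ∪ X.2)).sum id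
      = -(X.1.sum id + X.2.sum id) := by
    rw [Finset.sum_sdiff_eq_sub hu, sum_erase_zero_zmod hp hodd,
      Finset.sum_union hdisj]
    ring
  refine ⟨h1S, h1c, Finset.sdiff_subset, hcard, ?_, ?_⟩
  · rw [Finset.eq_empty_iff_forall_notMem]
    intro x hx
    simp only [Finset.mem_inter, Finset.mem_sdiff, Finset.mem_union, not_or] at hx
    tauto
  · rw [hsum]
    linear_combination -hs

lemma pairsOn_compl {p : ℕ} [NeZero p] (hp : p.Prime) (hodd : Odd p)
    {n1 n2 : ℕ} (h : n1 + n2 ≤ p - 1) (i : ZMod p) :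
    (PairsOn p (Finset.univ.erase 0) n1 n2 i).card
      = (PairsOn p (Finset.univ.erase 0) n1 (p - 1 - n1 - n2) (-i)).card := by
  have h' : n1 + (p - 1 - n1 - n2) ≤ p - 1 := by omega
  have hn2 : p - 1 - n1 - (p - 1 - n1 - n2) = n2 := by omega
  refine Finset.card_nbij' (fun X => (X.1, (Finset.univ.erase 0) \ (X.1 ∪ X.2)))
    (fun X => (X.1, (Finset.univ.erase 0) \ (X.1 ∪ X.2)))
    (pairsOn_compl_maps hp hodd h) ?_ ?_ ?_
  · intro X hX
    have := pairsOn_compl_maps hp hodd h' (i := -i) X hX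
    rwa [hn2, neg_neg] at this
  all_goals
    intro X hX
    rw [Finset.mem_coe, mem_pairsOn] at hX
    obtain ⟨h1S, h1c, h2S, h2c, hd, hs⟩ := hX
    exact Prod.ext rfl (compl_compl_eq h1S h2S hd)

/-! ### The translation bijection -/

lemma pairsOn_translate {p : ℕ} [NeZero p] (hp : p.Prime) {n1 n2 : ℕ}
    (h1 : 1 ≤ n1 + 2 * n2) (h2 : n1 + 2 * n2 ≤ p - 1) (i : ZMod p) :
    (PairsOn p Finset.univ n1 n2 i).card = (PairsOn p Finset.univ n1 n2 (i + 1)).card := by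
  haveI := Fact.mk hp
  set c : ZMod p := ((n1 + 2 * n2 : ℕ) : ZMod p) with hc
  have hc0 : c ≠ 0 := by
    rw [hc, Ne, ZMod.natCast_eq_zero_iff]
    intro hdvd
    have hplt := hp.two_le
    have := Nat.le_of_dvd (by omega) hdvd
    omega
  set t : ZMod p := c⁻¹ with ht
  have hct : c * t = 1 := mul_inv_cancel₀ hc0
  have key : ∀ (j : ZMod p) (u : ZMod p), ∀ X ∈ PairsOn p (Finset.univ : Finset (ZMod p)) n1 n2 j,
      (X.1.image (· + u), X.2.image (· + u)) ∈ PairsOn p Finset.univ n1 n2 (j + c * u) := by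
    intro j u X hX
    have hinj : Function.Injective (· + u : ZMod p → ZMod p) := add_left_injective u
    rw [mem_pairsOn] at hX ⊢
    obtain ⟨-, h1c, -, h2c, hd, hs⟩ := hX
    refine ⟨Finset.subset_univ _, ?_, Finset.subset_univ _, ?_, ?_, ?_⟩
    · rw [Finset.card_image_of_injective _ hinj, h1c]
    · rw [Finset.card_image_of_injective _ hinj, h2c]
    · rw [← Finset.image_inter _ _ hinj, hd, Finset.image_empty]
    · have e1 : (X.1.image (· + u)).sum id = X.1.sum id + n1 * u := by
        rw [Finset.sum_image (fun a _ b _ h => hinj h)]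
        simp only [id]
        rw [Finset.sum_add_distrib, Finset.sum_const, h1c, nsmul_eq_mul]
      have e2 : (X.2.image (· + u)).sum id = X.2.sum id + n2 * u := by
        rw [Finset.sum_image (fun a _ b _ h => hinj h)]
        simp only [id]
        rw [Finset.sum_add_distrib, Finset.sum_const, h2c, nsmul_eq_mul]
      rw [e1, e2, hc]
      push_cast
      linear_combination hs
  refine Finset.card_nbij' (fun X => (X.1.image (· + t), X.2.image (· + t)))
    (fun X => (X.1.image (· + (-t)), X.2.image (· + (-t)))) ?_ ?_ ?_ ?_
  · intro X hX
    have := key i t X hX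
    rwa [hct] at this
  · intro X hX
    have := key (i + 1) (-t) X hX
    rw [mul_neg, hct] at this
    rw [Finset.mem_coe]
    convert this using 2
    ring
  · intro X _
    have hcanc : ∀ (Y : Finset (ZMod p)), (Y.image (· + t)).image (· + (-t)) = Y := by
      intro Y
      rw [Finset.image_image]
      have : ((· + (-t)) ∘ (· + t) : ZMod p → ZMod p) = id := by funext x; simp
      rw [this, Finset.image_id]
    exact Prod.ext (hcanc _) (hcanc _)
  · intro X _
    have hcanc : ∀ (Y : Finset (ZMod p)), (Y.image (· + (-t))).image (· + t) = Y := by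
      intro Y
      rw [Finset.image_image]
      have : ((· + t) ∘ (· + (-t)) : ZMod p → ZMod p) = id := by funext x; simp
      rw [this, Finset.image_id]
    exact Prod.ext (hcanc _) (hcanc _)

/-! ### Splitting pairs over `ZMod p` by whether `0` belongs to `X1`, `X2`, or neither -/

lemma pairsOn_split {p : ℕ} [NeZero p] (n1 n2 : ℕ) (i : ZMod p) :
    (PairsOn p Finset.univ n1 n2 i).card
      = (PairsOn p (Finset.univ.erase 0) n1 n2 i).card
        + (if n1 = 0 then 0 else (PairsOn p (Finset.univ.erase 0) (n1 - 1) n2 i).card)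
        + (if n2 = 0 then 0 else (PairsOn p (Finset.univ.erase 0) n1 (n2 - 1) i).card) := by
  classical
  set B := PairsOn p (Finset.univ : Finset (ZMod p)) n1 n2 i with hB
  have hsplit1 := Finset.card_filter_add_card_filter_not
    (s := B) (p := fun X => (0 : ZMod p) ∈ X.1)
  have hsplit2 := Finset.card_filter_add_card_filter_not
    (s := B.filter (fun X => (0 : ZMod p) ∉ X.1)) (p := fun X => (0 : ZMod p) ∈ X.2)
  have hnone : (B.filter (fun X => (0:ZMod p) ∉ X.1)).filter (fun X => (0:ZMod p) ∉ X.2)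
      = PairsOn p (Finset.univ.erase 0) n1 n2 i := by
    ext X
    simp only [Finset.mem_filter, hB]
    rw [mem_pairsOn, mem_pairsOn]
    simp only [Finset.subset_erase, Finset.subset_univ, true_and]
    tauto
  have hin1 : (B.filter (fun X => (0:ZMod p) ∈ X.1)).card
      = (if n1 = 0 then 0 else (PairsOn p (Finset.univ.erase 0) (n1 - 1) n2 i).card) := by
    split_ifs with hn1
    · subst hn1
      rw [Finset.card_eq_zero, Finset.filter_eq_empty_iff]
      intro X hX
      rw [hB, mem_pairsOn] at hX
      intro h0
      have := Finset.card_pos.mpr ⟨0, h0⟩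
      omega
    · refine Finset.card_nbij' (fun X => (X.1.erase 0, X.2)) (fun X => (insert 0 X.1, X.2))
        ?_ ?_ ?_ ?_
      · intro X hX
        rw [Finset.mem_coe, Finset.mem_filter, hB, mem_pairsOn] at hX
        obtain ⟨⟨-, h1c, -, h2c, hd, hs⟩, h0⟩ := hX
        have h02 : (0 : ZMod p) ∉ X.2 := by
          intro h
          have : (0:ZMod p) ∈ X.1 ∩ X.2 := Finset.mem_inter.mpr ⟨h0, h⟩
          simp [hd] at this
        rw [Finset.mem_coe, mem_pairsOn]
        refine ⟨?_, ?_, ?_, h2c, ?_, ?_⟩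
        · rw [Finset.subset_erase]
          exact ⟨Finset.subset_univ _, Finset.notMem_erase _ _⟩
        · rw [Finset.card_erase_of_mem h0, h1c]
        · rw [Finset.subset_erase]
          exact ⟨Finset.subset_univ _, h02⟩
        · rw [Finset.eq_empty_iff_forall_notMem]
          intro x hx
          rw [Finset.mem_inter, Finset.mem_erase] at hx
          have : x ∈ X.1 ∩ X.2 := Finset.mem_inter.mpr ⟨hx.1.2, hx.2⟩
          simp [hd] at this
        · rw [Finset.sum_erase _ (by simp : id (0:ZMod p) = 0)]
          exact hs
      · intro X hX
        rw [Finset.mem_coe, mem_pairsOn] at hX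
        obtain ⟨h1S, h1c, h2S, h2c, hd, hs⟩ := hX
        have h01 : (0 : ZMod p) ∉ X.1 := fun h => (Finset.mem_erase.mp (h1S h)).1 rfl
        have h02 : (0 : ZMod p) ∉ X.2 := fun h => (Finset.mem_erase.mp (h2S h)).1 rfl
        rw [Finset.mem_coe, Finset.mem_filter, hB, mem_pairsOn]
        refine ⟨⟨Finset.subset_univ _, ?_, Finset.subset_univ _, h2c, ?_, ?_⟩, ?_⟩
        · rw [Finset.card_insert_of_notMem h01, h1c]; omega
        · rw [Finset.insert_inter_of_notMem h02, hd]
        · rw [Finset.sum_insert h01]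
          simpa using hs
        · exact Finset.mem_insert_self _ _
      · intro X hX
        rw [Finset.mem_coe, Finset.mem_filter] at hX
        exact Prod.ext (Finset.insert_erase hX.2) rfl
      · intro X hX
        rw [Finset.mem_coe, mem_pairsOn] at hX
        have h01 : (0 : ZMod p) ∉ X.1 := fun h => (Finset.mem_erase.mp (hX.1 h)).1 rfl
        exact Prod.ext (Finset.erase_insert h01) rfl
  have hin2 : ((B.filter (fun X => (0:ZMod p) ∉ X.1)).filter (fun X => (0:ZMod p) ∈ X.2)).card
      = (if n2 = 0 then 0 else (PairsOn p (Finset.univ.erase 0) n1 (n2 - 1) i).card) := by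
    split_ifs with hn2
    · subst hn2
      rw [Finset.card_eq_zero, Finset.filter_eq_empty_iff]
      intro X hX
      rw [Finset.mem_filter, hB, mem_pairsOn] at hX
      intro h0
      have := Finset.card_pos.mpr ⟨0, h0⟩
      omega
    · refine Finset.card_nbij' (fun X => (X.1, X.2.erase 0)) (fun X => (X.1, insert 0 X.2))
        ?_ ?_ ?_ ?_
      · intro X hX
        rw [Finset.mem_coe, Finset.mem_filter, Finset.mem_filter, hB, mem_pairsOn] at hX
        obtain ⟨⟨⟨-, h1c, -, h2c, hd, hs⟩, h01⟩, h02⟩ := hX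
        rw [Finset.mem_coe, mem_pairsOn]
        refine ⟨?_, h1c, ?_, ?_, ?_, ?_⟩
        · rw [Finset.subset_erase]
          exact ⟨Finset.subset_univ _, h01⟩
        · rw [Finset.subset_erase]
          exact ⟨Finset.subset_univ _, Finset.notMem_erase _ _⟩
        · rw [Finset.card_erase_of_mem h02, h2c]
        · rw [Finset.eq_empty_iff_forall_notMem]
          intro x hx
          rw [Finset.mem_inter, Finset.mem_erase] at hx
          have : x ∈ X.1 ∩ X.2 := Finset.mem_inter.mpr ⟨hx.1, hx.2.2⟩
          simp [hd] at this
        · rw [Finset.sum_erase _ (by simp : id (0:ZMod p) = 0)]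
          exact hs
      · intro X hX
        rw [Finset.mem_coe, mem_pairsOn] at hX
        obtain ⟨h1S, h1c, h2S, h2c, hd, hs⟩ := hX
        have h01 : (0 : ZMod p) ∉ X.1 := fun h => (Finset.mem_erase.mp (h1S h)).1 rfl
        have h02 : (0 : ZMod p) ∉ X.2 := fun h => (Finset.mem_erase.mp (h2S h)).1 rfl
        rw [Finset.mem_coe, Finset.mem_filter, Finset.mem_filter, hB, mem_pairsOn]
        refine ⟨⟨⟨Finset.subset_univ _, h1c, Finset.subset_univ _, ?_, ?_, ?_⟩, h01⟩, ?_⟩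
        · rw [Finset.card_insert_of_notMem h02, h2c]; omega
        · rw [Finset.inter_insert_of_notMem h01, hd]
        · rw [Finset.sum_insert h02]
          have : id (0 : ZMod p) = 0 := rfl
          rw [this, zero_add]
          exact hs
        · exact Finset.mem_insert_self _ _
      · intro X hX
        rw [Finset.mem_coe, Finset.mem_filter, Finset.mem_filter] at hX
        exact Prod.ext rfl (Finset.insert_erase hX.2)
      · intro X hX
        rw [Finset.mem_coe, mem_pairsOn] at hX
        have h02 : (0 : ZMod p) ∉ X.2 := fun h => (Finset.mem_erase.mp (hX.2.2.1 h)).1 rfl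
        exact Prod.ext rfl (Finset.erase_insert h02)
  rw [← hsplit1, ← hsplit2, hnone, hin1, hin2]
  ring

/-! ### Base case -/

lemma pairsOn_base {p : ℕ} [NeZero p] (i : ZMod p) :
    (PairsOn p (Finset.univ.erase 0) 0 0 i).card = if (0 : ZMod p) = i then 1 else 0 := by
  classical
  rw [PairsOn, Finset.powersetCard_zero, Finset.singleton_product_singleton,
    Finset.filter_singleton]
  have : (((∅ : Finset (ZMod p)) ∩ ∅ = ∅) ∧
      ((1:ℕ) : ZMod p) * (∅ : Finset (ZMod p)).sum id
        + ((2:ℕ) : ZMod p) * (∅ : Finset (ZMod p)).sum id = i) ↔ (0 : ZMod p) = i := by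
    simp
  rw [if_congr this rfl rfl]
  split_ifs <;> simp

/-! ### The signed count `D` and its recurrence -/

/-- The signed count `A_0 - A_1` for subsets of the nonzero residues. -/
def Dcnt (p : ℕ) [NeZero p] (n1 n2 : ℕ) : ℤ :=
  ((PairsOn p (Finset.univ.erase 0) n1 n2 0).card : ℤ)
    - ((PairsOn p (Finset.univ.erase 0) n1 n2 1).card : ℤ)

lemma delta_eq_dcnt (p : ℕ) [NeZero p] (n1 n2 : ℕ) :
    Delta p 1 2 n1 n2 = Dcnt p n1 n2 := rfl

lemma dcnt_rec {p : ℕ} [NeZero p] (hp : p.Prime) (hodd : Odd p) {n1 n2 : ℕ}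
    (h1 : 1 ≤ n1 + 2 * n2) (h2 : n1 + 2 * n2 ≤ p - 1) :
    Dcnt p n1 n2 + (if n1 = 0 then 0 else Dcnt p (n1 - 1) n2)
      + (if n2 = 0 then 0 else Dcnt p n1 (n2 - 1)) = 0 := by
  have s0 := pairsOn_split (p := p) n1 n2 0
  have s1 := pairsOn_split (p := p) n1 n2 1
  have tr := pairsOn_translate hp h1 h2 0
  rw [zero_add] at tr
  simp only [Dcnt]
  split_ifs at s0 s1 ⊢ <;> push_cast <;> omega

lemma dcnt_base {p : ℕ} [NeZero p] (hp : p.Prime) : Dcnt p 0 0 = 1 := by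
  haveI : Fact (1 < p) := ⟨hp.one_lt⟩
  rw [Dcnt, pairsOn_base, pairsOn_base]
  simp [zero_ne_one]

/-! ### Region 1 by induction -/

lemma dcnt_region1 {p : ℕ} [NeZero p] (hp : p.Prime) (hodd : Odd p) :
    ∀ N n1 n2 : ℕ, n1 + n2 = N → n1 + 2 * n2 ≤ p - 1 →
      Dcnt p n1 n2 = (-1) ^ (n1 + n2) * ((n1 + n2).choose n1 : ℤ) := by
  intro N
  induction N with
  | zero =>
    intro n1 n2 hN h
    obtain ⟨rfl, rfl⟩ : n1 = 0 ∧ n2 = 0 := by omega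
    simpa using dcnt_base hp
  | succ N ih =>
    intro n1 n2 hN h
    have hrec := dcnt_rec hp hodd (n1 := n1) (n2 := n2) (by omega) h
    obtain _ | a := n1 <;> obtain _ | b := n2
    · omega
    · -- n1 = 0, n2 = b+1
      simp only [Nat.succ_ne_zero, if_true, if_false, ite_true, ite_false, reduceIte,
        Nat.add_sub_cancel] at hrec
      have ihb := ih 0 b (by omega) (by omega)
      simp only [Nat.zero_add, Nat.choose_zero_right] at ihb ⊢
      have : Dcnt p 0 (b + 1) = -Dcnt p 0 b := by linarith
      rw [this, ihb]
      rw [pow_succ]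
      push_cast
      ring
    · -- n1 = a+1, n2 = 0
      simp only [Nat.succ_ne_zero, if_true, if_false, ite_true, ite_false, reduceIte,
        Nat.add_sub_cancel] at hrec
      have iha := ih a 0 (by omega) (by omega)
      simp only [Nat.add_zero, Nat.choose_self] at iha ⊢
      have : Dcnt p (a + 1) 0 = -Dcnt p a 0 := by linarith
      rw [this, iha]
      rw [pow_succ]
      push_cast
      ring
    · -- n1 = a+1, n2 = b+1
      simp only [Nat.succ_ne_zero, if_true, if_false, ite_true, ite_false, reduceIte,
        Nat.add_sub_cancel] at hrec
      have ih1 := ih a (b + 1) (by omega) (by omega)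
      have ih2 := ih (a + 1) b (by omega) (by omega)
      have hD : Dcnt p (a + 1) (b + 1) = -Dcnt p a (b + 1) - Dcnt p (a + 1) b := by
        linarith
      rw [hD, ih1, ih2]
      have e1 : a + 1 + (b + 1) = (a + (b + 1)) + 1 := by ring
      have e2 : a + 1 + b = a + (b + 1) := by ring
      rw [e1, e2]
      have e3 : (a + (b + 1) + 1).choose (a + 1) = (a + (b+1)).choose a + (a + (b+1)).choose (a + 1) :=
        Nat.choose_succ_succ _ _
      rw [e3, pow_succ]
      push_cast
      ring

/-! ### Main theorem -/

/-- Closed formulas for `Δ^{1,2}(n1,n2,p)` in the two halves of the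
finite Pascal triangle. -/
theorem rarefaction_stmt14 (p : ℕ) [NeZero p] (hp : p.Prime) (hodd : Odd p)
    (n1 n2 : ℕ) (hsum : n1 + n2 ≤ p - 1) :
    (n1 + 2 * n2 ≤ p - 1 →
      Delta p 1 2 n1 n2 = (-1) ^ (n1 + n2) * (n1 + n2).choose n1) ∧
    (p - 1 ≤ n1 + 2 * n2 →
      Delta p 1 2 n1 n2 = (-1) ^ n2 * (p - 1 - n2).choose n1) := by
  constructor
  · intro h
    rw [delta_eq_dcnt]
    exact dcnt_region1 hp hodd (n1 + n2) n1 n2 rfl h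
  · intro h
    rw [delta_eq_dcnt]
    set n2' : ℕ := p - 1 - n1 - n2 with hn2'
    -- D n1 n2 = D n1 n2'
    have hflip : Dcnt p n1 n2 = Dcnt p n1 n2' := by
      have c0 := pairsOn_compl hp hodd hsum (0 : ZMod p)
      have c1 := pairsOn_compl hp hodd hsum (1 : ZMod p)
      rw [neg_zero] at c0
      have cneg := pairsOn_neg p n1 n2' (-1 : ZMod p)
      rw [neg_neg] at cneg
      rw [Dcnt, Dcnt, c0, c1, cneg]
    rw [hflip]
    have h2' : n1 + 2 * n2' ≤ p - 1 := by omega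
    have := dcnt_region1 hp hodd (n1 + n2') n1 n2' rfl h2'
    rw [this]
    have hn2le : n2 ≤ p - 1 := by omega
    have e : n1 + n2' = p - 1 - n2 := by omega
    rw [e]
    -- signs: (-1)^(p-1-n2) = (-1)^n2 since p-1 is even
    obtain ⟨m, hm⟩ := hodd
    have hsign : ((-1 : ℤ)) ^ (p - 1 - n2) = (-1) ^ n2 := by
      rcases Nat.even_or_odd n2 with ⟨k, hk⟩ | ⟨k, hk⟩
      · have he1 : Even (p - 1 - n2) := ⟨m - k, by omega⟩
        have he2 : Even n2 := ⟨k, by omega⟩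
        rw [Even.neg_one_pow he1, Even.neg_one_pow he2]
      · have ho1 : Odd (p - 1 - n2) := ⟨m - k - 1, by omega⟩
        have ho2 : Odd n2 := ⟨k, by omega⟩
        rw [Odd.neg_one_pow ho1, Odd.neg_one_pow ho2]
    rw [hsign]
end

section
/- Let p be an odd prime and ζ_p = exp(2πi/p). Then Π_{j=1}^{p−1} (1 + ζ_p^j − ζ_p^{2j}) = L_p, the p-th Lucas number. -/
open Finset

/-- The Lucas numbers: `L 0 = 2`, `L 1 = 1`, `L (n+2) = L n + L (n+1)`. -/
def lucas : ℕ → ℕ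
  | 0 => 2
  | 1 => 1
  | n + 2 => lucas n + lucas (n + 1)

lemma prod_range_sub_pow (p : ℕ) (hp : 0 < p) {ζ : ℂ} (h : IsPrimitiveRoot ζ p) (x : ℂ) :
    ∏ j ∈ Finset.range p, (x - ζ ^ j) = x ^ p - 1 := by
  have himg : Finset.image (ζ ^ ·) (Finset.range p) = Polynomial.nthRootsFinset p (1 : ℂ) := by
    apply Finset.eq_of_subset_of_card_le
    · intro y hy
      simp only [Finset.mem_image, Finset.mem_range] at hy
      obtain ⟨j, _, rfl⟩ := hy
      rw [Polynomial.mem_nthRootsFinset hp, ← pow_mul, mul_comm, pow_mul, h.pow_eq_one, one_pow]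
    · rw [h.card_nthRootsFinset, Finset.card_image_of_injOn h.injOn_pow, Finset.card_range]
  have h2 := congrArg (Polynomial.eval x) (Polynomial.X_pow_sub_one_eq_prod hp h)
  simp only [Polynomial.eval_sub, Polynomial.eval_pow, Polynomial.eval_X, Polynomial.eval_one,
    Polynomial.eval_prod, Polynomial.eval_C] at h2
  rw [← himg, Finset.prod_image (fun a ha b hb hab => h.injOn_pow ha hb hab)] at h2
  exact h2.symm

lemma lucas_formula (φ ψ : ℂ) (hsum : φ + ψ = 1) (hprod : φ * ψ = -1) (n : ℕ) :
    (lucas n : ℂ) = φ ^ n + ψ ^ n := by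
  have hφ2 : φ ^ 2 = φ + 1 := by linear_combination φ * hsum - hprod
  have hψ2 : ψ ^ 2 = ψ + 1 := by linear_combination ψ * hsum - hprod
  induction n using Nat.twoStepInduction with
  | zero => simp [lucas]; norm_num
  | one => simp [lucas, hsum]
  | more n ih1 ih2 =>
    have : (lucas (n + 2) : ℂ) = (lucas n : ℂ) + (lucas (n + 1) : ℂ) := by
      rw [lucas]; push_cast; ring
    rw [this, ih1, ih2]
    have e1 : φ ^ (n + 2) = φ ^ n * φ ^ 2 := by ring
    have e2 : ψ ^ (n + 2) = ψ ^ n * ψ ^ 2 := by ring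
    rw [e1, e2, hφ2, hψ2]; ring

/-- `∏_{j=1}^{p-1} (1 + ζ_p^j - ζ_p^{2j}) = L_p`, the `p`-th Lucas
number. -/
theorem rarefaction_stmt15 (p : ℕ) (hp : p.Prime) (hodd : Odd p)
    (ζ : ℂ) (hζ : ζ = Complex.exp (2 * Real.pi * Complex.I / p)) :
    ∏ j ∈ Finset.Icc 1 (p - 1), (1 + ζ ^ j - ζ ^ (2 * j)) = (lucas p : ℂ) := by
  have hp1 : 0 < p := hp.pos
  have h : IsPrimitiveRoot ζ p := by
    rw [hζ]; exact Complex.isPrimitiveRoot_exp p hp.ne_zero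
  set s5 : ℂ := ((Real.sqrt 5 : ℝ) : ℂ) with hs5def
  have hs5 : s5 ^ 2 = 5 := by
    rw [hs5def, ← Complex.ofReal_pow, Real.sq_sqrt (by norm_num : (0:ℝ) ≤ 5)]
    norm_num
  set φ : ℂ := (1 + s5) / 2 with hφdef
  set ψ : ℂ := (1 - s5) / 2 with hψdef
  have hsum : φ + ψ = 1 := by rw [hφdef, hψdef]; ring
  have hprod : φ * ψ = -1 := by
    rw [hφdef, hψdef]; linear_combination (-1/4 : ℂ) * hs5
  have hrange : Finset.range p = insert 0 (Finset.Icc 1 (p - 1)) := by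
    ext j
    simp only [Finset.mem_range, Finset.mem_insert, Finset.mem_Icc]
    omega
  have h0 : (0 : ℕ) ∉ Finset.Icc 1 (p - 1) := by simp
  set A : ℂ := ∏ j ∈ Finset.Icc 1 (p - 1), (φ - ζ ^ j) with hAdef
  set B : ℂ := ∏ j ∈ Finset.Icc 1 (p - 1), (ζ ^ j - ψ) with hBdef
  have hA : (φ - 1) * A = φ ^ p - 1 := by
    have := prod_range_sub_pow p hp1 h φ
    rw [hrange, Finset.prod_insert h0] at this
    simpa using this
  have hB : (1 - ψ) * B = 1 - ψ ^ p := by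
    have h1 := prod_range_sub_pow p hp1 h ψ
    have h2 : ∏ j ∈ Finset.range p, (ζ ^ j - ψ) = 1 - ψ ^ p := by
      calc ∏ j ∈ Finset.range p, (ζ ^ j - ψ)
          = ∏ j ∈ Finset.range p, (-1 : ℂ) * (ψ - ζ ^ j) := by
            apply Finset.prod_congr rfl; intros; ring
        _ = (∏ _j ∈ Finset.range p, (-1 : ℂ)) * ∏ j ∈ Finset.range p, (ψ - ζ ^ j) :=
            Finset.prod_mul_distrib
        _ = (-1) ^ p * (ψ ^ p - 1) := by rw [Finset.prod_const, Finset.card_range, h1]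
        _ = 1 - ψ ^ p := by rw [hodd.neg_one_pow]; ring
    rw [hrange, Finset.prod_insert h0] at h2
    simpa using h2
  have hfac : ∏ j ∈ Finset.Icc 1 (p - 1), (1 + ζ ^ j - ζ ^ (2 * j)) = A * B := by
    rw [hAdef, hBdef, ← Finset.prod_mul_distrib]
    apply Finset.prod_congr rfl
    intro j _
    have h2j : ζ ^ (2 * j) = (ζ ^ j) ^ 2 := by rw [mul_comm, pow_mul]
    rw [h2j]
    linear_combination (-(ζ ^ j)) * hsum + hprod
  have hunit : (φ - 1) * (1 - ψ) = 1 := by linear_combination hsum - hprod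
  have hmul : φ ^ p * ψ ^ p = -1 := by rw [← mul_pow, hprod, hodd.neg_one_pow]
  rw [hfac, lucas_formula φ ψ hsum hprod]
  calc A * B = ((φ - 1) * (1 - ψ)) * (A * B) := by rw [hunit, one_mul]
    _ = ((φ - 1) * A) * ((1 - ψ) * B) := by ring
    _ = (φ ^ p - 1) * (1 - ψ ^ p) := by rw [hA, hB]
    _ = φ ^ p + ψ ^ p := by linear_combination -hmul
end

section
/- Let p ≥ 5 be a prime, ζ_p = exp(2πi/p), and δ ∈ {0,…,p−2}. Then the elementary symmetric polynomial of degree p−1−δ of the p−1 complex numbers (1 + ζ_p^j − ζ_p^{2j}), j = 1,…,p−1, equals C(p−1, δ) + Σ_{k=1}^{(p−1)/2} C(k−1, δ)·(C(p−k, k) + C(p−k−1, k−1)). In particular, this symmetric polynomial is a positive integer and is congruent to C(p−1, δ) modulo p. -/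
open Finset Polynomial

noncomputable def Ufib (n : ℕ) (c : ℂ) : ℂ :=
  ∑ k ∈ Finset.range (n + 1), (-1 : ℂ) ^ k * ((n - k).choose k : ℂ) * c ^ k

def acoef (p k : ℕ) : ℕ := (p - k).choose k + (p - k - 1).choose (k - 1)

lemma Ufib_rec (n : ℕ) (c : ℂ) : Ufib (n + 2) c = Ufib (n + 1) c - c * Ufib n c := by
  unfold Ufib
  conv_lhs => rw [Finset.sum_range_succ' _ (n + 2), Finset.sum_range_succ]
  conv_rhs => rw [Finset.sum_range_succ' _ (n + 1), Finset.mul_sum]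
  have h0 : ((n + 2 - (n + 1 + 1)).choose (n + 1 + 1) : ℂ) = 0 := by norm_num
  rw [h0]
  rw [add_sub_right_comm, ← Finset.sum_sub_distrib]
  have : ∀ k ∈ Finset.range (n + 1),
      (-1 : ℂ) ^ (k + 1) * ((n + 1 - (k + 1)).choose (k + 1) : ℂ) * c ^ (k + 1) -
        c * ((-1 : ℂ) ^ k * ((n - k).choose k : ℂ) * c ^ k) =
      (-1 : ℂ) ^ (k + 1) * ((n + 2 - (k + 1)).choose (k + 1) : ℂ) * c ^ (k + 1) := by
    intro k hk
    rw [Finset.mem_range] at hk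
    have h1 : n + 2 - (k + 1) = (n - k) + 1 := by omega
    have h2 : n + 1 - (k + 1) = n - k := by omega
    rw [h1, h2, Nat.choose_succ_succ']
    push_cast
    ring
  rw [Finset.sum_congr rfl this]
  norm_num

lemma lucas_pow (c α β : ℂ) (hs : α + β = 1) (hc : α * β = c) :
    ∀ n : ℕ, α ^ (n + 2) + β ^ (n + 2) = Ufib (n + 2) c - c * Ufib n c := by
  have hα : α ^ 2 = α - c := by linear_combination α * hs - hc
  have hβ : β ^ 2 = β - c := by linear_combination β * hs - hc
  have h0 : Ufib 0 c = 1 := by simp [Ufib]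
  have h1 : Ufib 1 c = 1 := by simp [Ufib, Finset.sum_range_succ]
  have h2 : Ufib 2 c = 1 - c := by
    simp [Ufib, Finset.sum_range_succ]; ring
  have h3 : Ufib 3 c = 1 - 2 * c := by
    simp [Ufib, Finset.sum_range_succ]; ring
  have key : ∀ n : ℕ, (α ^ (n + 2) + β ^ (n + 2) = Ufib (n + 2) c - c * Ufib n c) ∧
      (α ^ (n + 3) + β ^ (n + 3) = Ufib (n + 3) c - c * Ufib (n + 1) c) := by
    intro n
    induction n with
    | zero =>
      refine ⟨?_, ?_⟩
      · rw [h2, h0]; linear_combination hα + hβ + hs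
      · rw [show (0:ℕ)+3 = 3 from rfl, h3, h1]
        linear_combination (α + 1) * hα + (β + 1) * hβ + (1 - c) * hs
    | succ m ih =>
      refine ⟨ih.2, ?_⟩
      have h4 := Ufib_rec (m + 2) c
      have h5 := Ufib_rec m c
      show α ^ (m + 4) + β ^ (m + 4) = Ufib (m + 4) c - c * Ufib (m + 2) c
      linear_combination α ^ (m + 2) * hα + β ^ (m + 2) * hβ + ih.2 - c * ih.1 - h4 + c * h5
  exact fun n => (key n).1

lemma prod_root (p : ℕ) (hp : 0 < p) (ζ : ℂ) (hζ : IsPrimitiveRoot ζ p) (x : ℂ) :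
    ∏ j ∈ Finset.range p, (x - ζ ^ j) = x ^ p - 1 := by
  have hroots : ((X : ℂ[X]) ^ p - C 1).roots = (Multiset.range p).map (fun j => ζ ^ j) := by
    rw [← Polynomial.nthRoots]
    rw [hζ.nthRoots_eq (one_pow p)]
    simp
  have hmonic : ((X : ℂ[X]) ^ p - C 1).Monic := monic_X_pow_sub_C 1 hp.ne'
  have hcard : Multiset.card ((X : ℂ[X]) ^ p - C 1).roots = ((X : ℂ[X]) ^ p - C 1).natDegree := by
    rw [hroots, Multiset.card_map, Multiset.card_range, natDegree_X_pow_sub_C]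
  have hprod := Polynomial.prod_multiset_X_sub_C_of_monic_of_roots_card_eq hmonic hcard
  have := congrArg (Polynomial.eval x) hprod
  rw [hroots] at this
  simp only [Multiset.map_map, Function.comp] at this
  rw [Polynomial.eval_multiset_prod] at this
  simp only [Multiset.map_map, Function.comp, Polynomial.eval_sub, Polynomial.eval_pow,
    Polynomial.eval_X, Polynomial.eval_C, Polynomial.eval_one] at this
  rw [← this]
  rw [Finset.prod_eq_multiset_prod]
  simp [Finset.range_val]

lemma prod_root' (p : ℕ) (hp : 0 < p) (ζ : ℂ) (hζ : IsPrimitiveRoot ζ p) (x : ℂ) :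
    (x - 1) * ∏ j ∈ Finset.Icc 1 (p - 1), (x - ζ ^ j) = x ^ p - 1 := by
  have hset : Finset.range p = insert 0 (Finset.Icc 1 (p - 1)) := by
    ext j; simp only [Finset.mem_range, Finset.mem_insert, Finset.mem_Icc]; omega
  have := prod_root p hp ζ hζ x
  rw [hset, Finset.prod_insert (by simp)] at this
  simpa using this

lemma lemA (m : ℕ) (c : ℂ) :
    c * (c ^ (m + 1) - ∑ k ∈ Finset.Icc 1 (m + 2),
        (-1 : ℂ) ^ k * (acoef (m + 2) k : ℂ) * c ^ (k - 1))
      = c ^ (m + 2) + 1 - (Ufib (m + 2) c - c * Ufib m c) := by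
  rw [← Finset.Ico_add_one_right_eq_Icc, Finset.sum_Ico_eq_sum_range]
  have hr : m + 2 + 1 - 1 = m + 2 := by omega
  rw [hr]
  unfold Ufib
  rw [Finset.sum_range_succ' _ (m + 2)]
  have hext : (∑ k ∈ Finset.range (m + 2), c * ((-1 : ℂ) ^ k * ((m - k).choose k : ℂ) * c ^ k))
      = c * ∑ k ∈ Finset.range (m + 1), (-1 : ℂ) ^ k * ((m - k).choose k : ℂ) * c ^ k := by
    rw [Finset.sum_range_succ, Finset.mul_sum]
    have h0 : ((m - (m + 1)).choose (m + 1) : ℂ) = 0 := by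
      have h : m - (m + 1) = 0 := by omega
      rw [h]; simp
    rw [h0]; ring
  rw [← hext]
  rw [mul_sub, Finset.mul_sum]
  have hterm : ∀ k ∈ Finset.range (m + 2),
      c * ((-1 : ℂ) ^ (1 + k) * (acoef (m + 2) (1 + k) : ℂ) * c ^ (1 + k - 1)) =
      (-1 : ℂ) ^ (k + 1) * ((m + 2 - (k + 1)).choose (k + 1) : ℂ) * c ^ (k + 1) -
        c * ((-1 : ℂ) ^ k * ((m - k).choose k : ℂ) * c ^ k) := by
    intro k hk
    have e1 : 1 + k - 1 = k := by omega
    have e2 : m + 2 - (k + 1) = m + 1 - k := by omega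
    have e3 : acoef (m + 2) (1 + k) = (m + 1 - k).choose (k + 1) + (m - k).choose k := by
      unfold acoef
      have : m + 2 - (1 + k) = m + 1 - k := by omega
      rw [this]
      have h4 : m + 1 - k - 1 = m - k := by omega
      have h3 : 1 + k - 1 = k := by omega
      rw [h4, h3, Nat.add_comm 1 k]
    rw [e1, e2, e3]
    push_cast
    have : (1 : ℤ) + k - 1 = k := by ring
    rw [show (1 + k) = (k + 1) from by omega]
    ring
  rw [Finset.sum_congr rfl hterm, Finset.sum_sub_distrib]
  simp only [pow_zero, Nat.sub_zero, Nat.choose_zero_right, Nat.cast_one, mul_one, one_mul]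
  ring

lemma scalar_main (p : ℕ) (hp : p.Prime) (hp5 : 5 ≤ p) (ζ : ℂ)
    (hζ : IsPrimitiveRoot ζ p) (t : ℂ) (ht : t ≠ 1) :
    ∏ j ∈ Finset.Icc 1 (p - 1), (t - (1 + ζ ^ j - ζ ^ (2 * j))) =
      (t - 1) ^ (p - 1) - ∑ k ∈ Finset.Icc 1 p,
        (-1 : ℂ) ^ k * (acoef p k : ℂ) * (t - 1) ^ (k - 1) := by
  obtain ⟨w, hw⟩ : ∃ w : ℂ, w ^ 2 = 5 - 4 * t := IsAlgClosed.exists_pow_nat_eq _ two_pos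
  set α : ℂ := (1 + w) / 2 with hαdef
  set β : ℂ := (1 - w) / 2 with hβdef
  have hs : α + β = 1 := by rw [hαdef, hβdef]; ring
  have hc : α * β = t - 1 := by rw [hαdef, hβdef]; linear_combination (-(1 : ℂ)/4) * hw
  have hq : (α - 1) * (β - 1) = t - 1 := by linear_combination hc - hs
  have ht1 : t - 1 ≠ 0 := sub_ne_zero.mpr ht
  have hα1 : α - 1 ≠ 0 := fun h => ht1 (by rw [← hq, h, zero_mul])
  have hβ1 : β - 1 ≠ 0 := fun h => ht1 (by rw [← hq, h, mul_zero])
  have hodd : Odd p := hp.odd_of_ne_two (by omega)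
  have heven : Even (p - 1) := Nat.Odd.sub_odd hodd odd_one
  -- factor each term
  have hfac : ∀ j ∈ Finset.Icc 1 (p - 1), (t - (1 + ζ ^ j - ζ ^ (2 * j))) =
      (ζ ^ j - α) * (ζ ^ j - β) := by
    intro j _
    rw [show 2 * j = j * 2 from mul_comm 2 j, pow_mul]
    linear_combination (ζ ^ j) * hs - hc
  rw [Finset.prod_congr rfl hfac, Finset.prod_mul_distrib]
  -- flip signs
  have hflip : ∀ x : ℂ, ∏ j ∈ Finset.Icc 1 (p - 1), (ζ ^ j - x) =
      ∏ j ∈ Finset.Icc 1 (p - 1), (x - ζ ^ j) := by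
    intro x
    have h1 : ∀ j ∈ Finset.Icc 1 (p - 1), (ζ ^ j - x) = (-1) * (x - ζ ^ j) := by
      intro j _; ring
    rw [Finset.prod_congr rfl h1, Finset.prod_mul_distrib, Finset.prod_const]
    rw [Nat.card_Icc]
    rw [show p - 1 + 1 - 1 = p - 1 from by omega, heven.neg_one_pow, one_mul]
  rw [hflip α, hflip β]
  -- main computation
  have hA := prod_root' p hp.pos ζ hζ α
  have hB := prod_root' p hp.pos ζ hζ β
  obtain ⟨m, rfl⟩ : ∃ m, p = m + 2 := ⟨p - 2, by omega⟩
  have hS := lucas_pow (t - 1) α β hs hc m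
  have hlemA := lemA m (t - 1)
  have habp : α ^ (m + 2) * β ^ (m + 2) = (t - 1) ^ (m + 2) := by rw [← mul_pow, hc]
  apply mul_left_cancel₀ ht1
  rw [show m + 2 - 1 = m + 1 from by omega] at *
  rw [hlemA]
  calc (t - 1) * ((∏ j ∈ Finset.Icc 1 (m + 1), (α - ζ ^ j)) *
        ∏ j ∈ Finset.Icc 1 (m + 1), (β - ζ ^ j))
      = ((α - 1) * ∏ j ∈ Finset.Icc 1 (m + 1), (α - ζ ^ j)) *
        ((β - 1) * ∏ j ∈ Finset.Icc 1 (m + 1), (β - ζ ^ j)) := by rw [← hq]; ring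
    _ = (α ^ (m + 2) - 1) * (β ^ (m + 2) - 1) := by rw [hA, hB]
    _ = (t - 1) ^ (m + 2) + 1 - (Ufib (m + 2) (t - 1) - (t - 1) * Ufib m (t - 1)) := by
        linear_combination habp - hS

lemma poly_main (p : ℕ) (hp : p.Prime) (hp5 : 5 ≤ p) (ζ : ℂ)
    (hζ : IsPrimitiveRoot ζ p) :
    (∏ j ∈ Finset.Icc 1 (p - 1), (X - C (1 + ζ ^ j - ζ ^ (2 * j)))) =
      (X + C (-1 : ℂ)) ^ (p - 1) - ∑ k ∈ Finset.Icc 1 p,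
        C ((-1 : ℂ) ^ k * (acoef p k : ℂ)) * (X + C (-1 : ℂ)) ^ (k - 1) := by
  apply Polynomial.eq_of_infinite_eval_eq
  apply Set.Infinite.mono (s := {t : ℂ | t ≠ 1})
  · intro t ht
    simp only [Set.mem_setOf_eq] at ht ⊢
    have h := scalar_main p hp hp5 ζ hζ t ht
    simp only [eval_prod, eval_sub, eval_add, eval_pow, eval_X, eval_C, eval_finset_sum,
      eval_mul]
    rw [show t + (-1 : ℂ) = t - 1 from by ring]
    convert h using 2
  · exact Set.Finite.infinite_compl (Set.finite_singleton 1)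

theorem main_eq (p : ℕ) (hp : p.Prime) (hp5 : 5 ≤ p)
    (δ : ℕ) (hδ : δ ≤ p - 2)
    (ζ : ℂ) (hζ : IsPrimitiveRoot ζ p) :
    ∑ S ∈ (Finset.Icc 1 (p - 1)).powersetCard (p - 1 - δ),
        ∏ j ∈ S, (1 + ζ ^ j - ζ ^ (2 * j)) =
      (((p - 1).choose δ + ∑ k ∈ Finset.Icc 1 ((p - 1) / 2),
        (k - 1).choose δ * ((p - k).choose k + (p - k - 1).choose (k - 1)) : ℕ) : ℂ) := by
  have hodd : Odd p := hp.odd_of_ne_two (by omega)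
  obtain ⟨r, hr⟩ := hodd
  set f : ℕ → ℂ := fun j => 1 + ζ ^ j - ζ ^ (2 * j) with hf
  have hP := poly_main p hp hp5 ζ hζ
  have hcard : Multiset.card ((Finset.Icc 1 (p - 1)).val.map f) = p - 1 := by
    rw [Multiset.card_map]
    change (Finset.Icc 1 (p - 1)).card = _
    rw [Nat.card_Icc]
    omega
  have hcoeff := congrArg (fun q : ℂ[X] => q.coeff δ) hP
  -- LHS coefficient: esymm
  have h1 : (∏ j ∈ Finset.Icc 1 (p - 1), (X - C (f j))).coeff δ =
      (-1 : ℂ) ^ (p - 1 - δ) *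
        ∑ S ∈ (Finset.Icc 1 (p - 1)).powersetCard (p - 1 - δ), ∏ j ∈ S, f j := by
    rw [Finset.prod_eq_multiset_prod]
    rw [show (Finset.Icc 1 (p - 1)).val.map (fun j => X - C (f j)) =
        ((Finset.Icc 1 (p - 1)).val.map f).map (fun t => X - C t) from by
      rw [Multiset.map_map]; rfl]
    rw [Multiset.prod_X_sub_C_coeff _ (by rw [hcard]; omega)]
    rw [hcard, Finset.esymm_map_val]
  rw [h1] at hcoeff
  -- RHS coefficient
  have h2 : ((X + C (-1 : ℂ)) ^ (p - 1) - ∑ k ∈ Finset.Icc 1 p,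
      C ((-1 : ℂ) ^ k * (acoef p k : ℂ)) * (X + C (-1 : ℂ)) ^ (k - 1)).coeff δ =
      (-1 : ℂ) ^ (p - 1 - δ) * ((p - 1).choose δ : ℂ) -
        ∑ k ∈ Finset.Icc 1 p, (-1 : ℂ) ^ k * (acoef p k : ℂ) *
          ((-1 : ℂ) ^ (k - 1 - δ) * ((k - 1).choose δ : ℂ)) := by
    rw [coeff_sub, Polynomial.coeff_X_add_C_pow, Polynomial.finset_sum_coeff]
    simp only [coeff_C_mul, Polynomial.coeff_X_add_C_pow]
  rw [h2] at hcoeff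
  -- solve for the esymm sum
  have hsq : (-1 : ℂ) ^ (p - 1 - δ) * (-1 : ℂ) ^ (p - 1 - δ) = 1 := by
    rw [← pow_add]
    exact Even.neg_one_pow ⟨p - 1 - δ, rfl⟩
  have hmain : ∑ S ∈ (Finset.Icc 1 (p - 1)).powersetCard (p - 1 - δ), ∏ j ∈ S, f j =
      ((p - 1).choose δ : ℂ) +
        ∑ k ∈ Finset.Icc 1 p, (acoef p k : ℂ) * ((k - 1).choose δ : ℂ) := by
    have := congrArg (fun z => (-1 : ℂ) ^ (p - 1 - δ) * z) hcoeff
    rw [← mul_assoc, hsq, one_mul] at this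
    rw [this, mul_sub, ← mul_assoc, hsq, one_mul, Finset.mul_sum, sub_eq_add_neg,
      ← Finset.sum_neg_distrib]
    congr 1
    apply Finset.sum_congr rfl
    intro k hk
    rw [Finset.mem_Icc] at hk
    by_cases hdk : δ ≤ k - 1
    · have hE : Odd ((p - 1 - δ) + (k + (k - 1 - δ))) := by
        refine ⟨r + k - δ - 1, by omega⟩
      have hsgn : (-1 : ℂ) ^ (p - 1 - δ) * ((-1 : ℂ) ^ k * (-1 : ℂ) ^ (k - 1 - δ)) = -1 := by
        rw [← pow_add, ← pow_add]
        exact hE.neg_one_pow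
      linear_combination (-((acoef p k : ℂ) * ((k - 1).choose δ : ℂ))) * hsgn
    · have h0 : (k - 1).choose δ = 0 := Nat.choose_eq_zero_of_lt (by omega)
      rw [h0]
      simp
  -- truncate the sum and cast
  have htrunc : ∑ k ∈ Finset.Icc 1 p, (acoef p k : ℂ) * ((k - 1).choose δ : ℂ) =
      ∑ k ∈ Finset.Icc 1 ((p - 1) / 2), (acoef p k : ℂ) * ((k - 1).choose δ : ℂ) := by
    symm
    apply Finset.sum_subset
    · apply Finset.Icc_subset_Icc_right; omega
    · intro k hk hk2
      rw [Finset.mem_Icc] at hk hk2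
      have hzero : acoef p k = 0 := by
        unfold acoef
        rw [Nat.choose_eq_zero_of_lt (by omega), Nat.choose_eq_zero_of_lt (by omega)]
      rw [hzero]
      simp
  rw [htrunc] at hmain
  rw [hmain]
  unfold acoef
  push_cast
  congr 1
  apply Finset.sum_congr rfl
  intro k hk
  ring

/-- For a prime `p ≥ 5` and `δ ∈ {0,…,p-2}`, the elementary symmetric
polynomial of degree `p-1-δ` of the numbers `1 + ζ_p^j - ζ_p^{2j}`, `j = 1,…,p-1`, equals
`C(p-1,δ) + ∑_{k=1}^{(p-1)/2} C(k-1,δ)(C(p-k,k) + C(p-k-1,k-1))`; in particular it is a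
positive integer congruent to `C(p-1,δ)` modulo `p`. -/
theorem rarefaction_stmt19 (p : ℕ) (hp : p.Prime) (hp5 : 5 ≤ p)
    (δ : ℕ) (hδ : δ ≤ p - 2)
    (ζ : ℂ) (hζ : ζ = Complex.exp (2 * Real.pi * Complex.I / p)) :
    ∑ S ∈ (Finset.Icc 1 (p - 1)).powersetCard (p - 1 - δ),
        ∏ j ∈ S, (1 + ζ ^ j - ζ ^ (2 * j)) =
      (((p - 1).choose δ + ∑ k ∈ Finset.Icc 1 ((p - 1) / 2),
        (k - 1).choose δ * ((p - k).choose k + (p - k - 1).choose (k - 1)) : ℕ) : ℂ) ∧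
    0 < (p - 1).choose δ + ∑ k ∈ Finset.Icc 1 ((p - 1) / 2),
        (k - 1).choose δ * ((p - k).choose k + (p - k - 1).choose (k - 1)) ∧
    ((p - 1).choose δ + ∑ k ∈ Finset.Icc 1 ((p - 1) / 2),
        (k - 1).choose δ * ((p - k).choose k + (p - k - 1).choose (k - 1)) ≡
      (p - 1).choose δ [MOD p]) := by
  have hζp : IsPrimitiveRoot ζ p := by
    rw [hζ]; exact Complex.isPrimitiveRoot_exp p hp.ne_zero
  refine ⟨main_eq p hp hp5 δ hδ ζ hζp, ?_, ?_⟩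
  · exact Nat.add_pos_left (Nat.choose_pos (by omega)) _
  · have hdvd : p ∣ ∑ k ∈ Finset.Icc 1 ((p - 1) / 2),
        (k - 1).choose δ * ((p - k).choose k + (p - k - 1).choose (k - 1)) := by
      apply Finset.dvd_sum
      intro k hk
      rw [Finset.mem_Icc] at hk
      have h1 := Nat.add_one_mul_choose_eq (p - k - 1) (k - 1)
      have e1 : p - k - 1 + 1 = p - k := by omega
      have e2 : k - 1 + 1 = k := by omega
      rw [e1, e2] at h1
      have key : (p - k) * ((p - k).choose k + (p - k - 1).choose (k - 1)) =
          p * (p - k).choose k := by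
        rw [Nat.mul_add, h1, Nat.sub_mul, mul_comm ((p - k).choose k) k]
        exact Nat.sub_add_cancel (Nat.mul_le_mul_right _ (by omega))
      have hpd : p ∣ (p - k) * ((p - k).choose k + (p - k - 1).choose (k - 1)) := by
        rw [key]; exact dvd_mul_right p _
      rcases (Nat.Prime.dvd_mul hp).mp hpd with h | h
      · exfalso
        have := Nat.le_of_dvd (by omega) h
        omega
      · exact Dvd.dvd.mul_left h _
    exact ((Nat.modEq_iff_dvd' (Nat.le_add_right _ _)).mpr (by simpa using hdvd)).symm
end
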